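/- Let f : A → A be a homeomorphism of the closed annulus isotopic to the identity with lift F, and X ⊆ A a compact f-invariant set. If the rotation set ρ(F,X) (the set of all rotation numbers ρ(F,z) of points z ∈ X for which the limit exists) is a singleton {α}, then every point of X has well-defined rotation number α, and the convergence of (pr₁(Fⁿ(z̃)) − pr₁(z̃))/n to α is uniform over lifts z̃ of points of X. -/

import Mathlib

open Filter Topology

/-- The lifted annulus `𝒜 = ℝ × [0,1]`. -/
abbrev 𝒜 : Type := ℝ × (Set.Icc (0:ℝ) 1)

/-- The closed annulus `A = S¹ × [0,1]`. -/
abbrev Ann : Type := AddCircle (1:ℝ) × (Set.Icc (0:ℝ) 1)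

/-- The universal covering map `π : ℝ × [0,1] → S¹ × [0,1]`. -/
noncomputable def cov : 𝒜 → Ann := fun z => ((z.1 : AddCircle (1:ℝ)), z.2)

/-- The deck translation `T(x,y) = (x+1,y)`. -/
def T : 𝒜 → 𝒜 := fun z => (z.1 + 1, z.2)

lemma core {Z : Type*} [TopologicalSpace Z] [T2Space Z] (g : Z → Z)
    (Xt K : Set Z) (S : ℕ → Z → ℝ)
    (hK : IsCompact K) (hKne : K.Nonempty) (hKX : K ⊆ Xt)
    (hg : Set.MapsTo g Xt Xt)
    (hScont : ∀ n, Continuous (S n))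
    (hcoc : ∀ m n z, S (m + n) z = S m z + S n (g^[m] z))
    (hproj : ∀ z ∈ Xt, ∃ w ∈ K, ∀ n, S n w = S n z) :
    ∃ β : ℝ, (∃ z ∈ K, Tendsto (fun m : ℕ => S m z / m) atTop (𝓝 β)) ∧
      ∀ ε > 0, ∃ N : ℕ, ∀ n ≥ N, ∀ z ∈ Xt, S n z / n < β + ε := by
  have hS0 : ∀ z, S 0 z = 0 := by
    intro z
    have := hcoc 0 0 z
    simp at this
    linarith
  set M : ℕ → ℝ := fun n => sSup (S n '' K) with hM
  have bdd : ∀ n, BddAbove (S n '' K) := fun n => hK.bddAbove_image (hScont n).continuousOn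
  have hle : ∀ n, ∀ z ∈ Xt, S n z ≤ M n := by
    intro n z hz
    obtain ⟨w, hwK, hw⟩ := hproj z hz
    rw [← hw n]
    exact le_csSup (bdd n) ⟨w, hwK, rfl⟩
  have hgit : ∀ m : ℕ, Set.MapsTo g^[m] Xt Xt := fun m => hg.iterate m
  have hmax : ∀ n, ∃ x ∈ K, M n = S n x := fun n =>
    hK.exists_sSup_image_eq hKne (hScont n).continuousOn
  have hsub : Subadditive M := by
    intro m n
    obtain ⟨x, hxK, hx⟩ := hmax (m + n)
    rw [hx, hcoc m n x]
    exact add_le_add (hle m x (hKX hxK)) (hle n _ (hgit m (hKX hxK)))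
  -- lower bound on Birkhoff sums
  obtain ⟨z₀, hz₀⟩ := hKne
  set c : ℝ := sInf (S 1 '' K) with hc
  have hcge : ∀ z ∈ Xt, c ≤ S 1 z := by
    intro z hz
    obtain ⟨w, hwK, hw⟩ := hproj z hz
    rw [← hw 1]
    exact csInf_le (hK.bddBelow_image (hScont 1).continuousOn) ⟨w, hwK, rfl⟩
  have hSnge : ∀ n : ℕ, ∀ z ∈ Xt, (n : ℝ) * c ≤ S n z := by
    intro n
    induction n with
    | zero => intro z hz; simp [hS0]
    | succ n ih =>
      intro z hz
      have := hcoc n 1 z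
      have h1 := hcge _ (hgit n hz)
      have h2 := ih z hz
      push_cast
      rw [this]; linarith
  have hMge : ∀ n : ℕ, (n : ℝ) * c ≤ M n := fun n =>
    (hSnge n z₀ (hKX hz₀)).trans (hle n z₀ (hKX hz₀))
  have hbdd : BddBelow (Set.range fun n : ℕ => M n / n) := by
    refine ⟨min c 0, ?_⟩
    rintro x ⟨n, rfl⟩
    rcases Nat.eq_zero_or_pos n with h | h
    · simp [h]
    · have hn : (0:ℝ) < n := by exact_mod_cast h
      have : c ≤ M n / n := (le_div_iff₀ hn).2 (by linarith [hMge n])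
      exact le_trans (min_le_left _ _) this
  set β := hsub.lim with hβ
  have htM : Tendsto (fun n : ℕ => M n / n) atTop (𝓝 β) := hsub.tendsto_lim hbdd
  have hβle : ∀ n : ℕ, n ≠ 0 → (n : ℝ) * β ≤ M n := by
    intro n hn
    have := hsub.lim_le_div hbdd hn
    have hn' : (0:ℝ) < n := by positivity
    rw [le_div_iff₀ hn'] at this
    linarith
  -- the sets E n
  set E : ℕ → Set Z := fun n => {z ∈ K | ∀ m ≤ n, (m : ℝ) * β ≤ S m z} with hE
  have hEcl : ∀ n, IsClosed (E n) := by
    intro n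
    have : E n = K ∩ ⋂ m ∈ Finset.range (n+1), {z | (m : ℝ) * β ≤ S m z} := by
      ext z
      simp only [hE, Set.mem_setOf_eq, Set.mem_inter_iff, Set.mem_iInter, Finset.mem_range,
        Nat.lt_succ_iff]
    rw [this]
    exact hK.isClosed.inter (isClosed_biInter fun m _ =>
      isClosed_le continuous_const (hScont m))
  have hEdec : ∀ n, E (n+1) ⊆ E n := by
    intro n z hz
    exact ⟨hz.1, fun m hm => hz.2 m (hm.trans (Nat.le_succ n))⟩
  have hEne : ∀ n, (E n).Nonempty := by
    intro n
    rcases Nat.eq_zero_or_pos n with h0 | hn1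
    · subst h0
      exact ⟨z₀, hz₀, fun m hm => by simp [Nat.le_zero.1 hm, hS0]⟩
    by_contra hne
    rw [Set.not_nonempty_iff_eq_empty] at hne
    -- uniform δ
    have hIcc : (Finset.Icc 1 n).Nonempty := ⟨1, Finset.mem_Icc.2 ⟨le_refl 1, hn1⟩⟩
    set h : Z → ℝ := fun z => (Finset.Icc 1 n).inf' hIcc (fun m => S m z - m * β) with hh
    have hhcont : Continuous h :=
      Continuous.finset_inf'_apply hIcc fun m _ => (hScont m).sub continuous_const
    obtain ⟨w₀, hw₀K, hw₀max⟩ := hK.exists_isMaxOn ⟨z₀, hz₀⟩ hhcont.continuousOn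
    have hδpos : 0 < -h w₀ := by
      have : w₀ ∉ E n := by rw [hne]; exact Set.notMem_empty _
      simp only [hE, Set.mem_setOf_eq, not_and, not_forall] at this
      obtain ⟨m, hmn, hm⟩ := this hw₀K
      push_neg at hm
      have hm1 : 1 ≤ m := by
        by_contra h1
        push_neg at h1
        interval_cases m
        rw [hS0] at hm
        simp at hm
      have : h w₀ ≤ S m w₀ - m * β :=
        Finset.inf'_le _ (Finset.mem_Icc.2 ⟨hm1, hmn⟩)
      linarith
    set δ : ℝ := -h w₀ with hδ
    have hkey : ∀ z ∈ Xt, ∃ m, 1 ≤ m ∧ m ≤ n ∧ S m z ≤ m * β - δ := by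
      intro z hz
      obtain ⟨w, hwK, hw⟩ := hproj z hz
      have h1 : h w ≤ h w₀ := hw₀max hwK
      obtain ⟨m, hm, hmeq⟩ := Finset.exists_mem_eq_inf' hIcc (fun m => S m w - m * β)
      rw [Finset.mem_Icc] at hm
      refine ⟨m, hm.1, hm.2, ?_⟩
      rw [← hw m]
      have h3 : h w = S m w - ↑m * β := hmeq
      linarith
    -- constant C
    have hCr : (Finset.range (n+1)).Nonempty := Finset.nonempty_range_add_one
    set C : ℝ := (Finset.range (n+1)).sup' hCr (fun m => M m - m * β) with hC
    have hCub : ∀ m ≤ n, ∀ z ∈ Xt, S m z ≤ m * β + C := by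
      intro m hm z hz
      have : M m - (m:ℝ) * β ≤ C := Finset.le_sup' (fun m : ℕ => M m - (m:ℝ) * β) (Finset.mem_range.2 (Nat.lt_succ_of_le hm))
      linarith [hle m z hz]
    have hnR : (0:ℝ) < n := by exact_mod_cast hn1
    have hδn : 0 < δ / n := div_pos hδpos hnR
    -- main estimate by strong induction
    have main : ∀ N : ℕ, ∀ z ∈ Xt, S N z ≤ N * β + C - (δ / n) * ((N : ℝ) - n) := by
      intro N
      induction N using Nat.strong_induction_on with
      | _ N ih =>
        intro z hz
        rcases le_or_gt N n with hNn | hNn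
        · have h1 := hCub N hNn z hz
          have h2 : (N : ℝ) - n ≤ 0 := by
            have : (N:ℝ) ≤ n := by exact_mod_cast hNn
            linarith
          nlinarith
        · obtain ⟨m, hm1, hmn, hmle⟩ := hkey z hz
          have hmN : m ≤ N := hmn.trans hNn.le
          have hsplit : S N z = S m z + S (N - m) (g^[m] z) := by
            have := hcoc m (N - m) z
            rwa [Nat.add_sub_cancel' hmN] at this
          have hihyp := ih (N - m) (by omega) (g^[m] z) (hgit m hz)
          have hcast : ((N - m : ℕ) : ℝ) = (N : ℝ) - m := by
            push_cast [Nat.cast_sub hmN]; ring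
          rw [hcast] at hihyp
          have hmm : (δ / n) * m ≤ δ := by
            rw [div_mul_eq_mul_div, div_le_iff₀ hnR]
            have : (m:ℝ) ≤ n := by exact_mod_cast hmn
            nlinarith [hδpos]
          rw [hsplit]
          nlinarith
    -- contradiction
    obtain ⟨N₀, hN₀⟩ := exists_nat_gt ((n : ℝ) + C * n / δ)
    have hN₀n : n < N₀ := by
      have h1 : (0:ℝ) ≤ C * n / δ := by
        have hC0 : 0 ≤ C := by
          have : M 0 - ((0:ℕ):ℝ) * β ≤ C := Finset.le_sup' (fun m : ℕ => M m - (m:ℝ) * β) (Finset.mem_range.2 (Nat.succ_pos n))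
          have hM0 : M 0 = 0 := by
            have himg : S 0 '' K = {0} := by
              apply Set.eq_singleton_iff_nonempty_unique_mem.2
              exact ⟨⟨0, ⟨z₀, hz₀, hS0 z₀⟩⟩, by rintro x ⟨w, _, rfl⟩; exact hS0 w⟩
            rw [show M 0 = sSup (S 0 '' K) from rfl, himg, csSup_singleton]
          simp [hM0] at this
          linarith
        positivity
      have : (n:ℝ) < N₀ := by linarith
      exact_mod_cast this
    obtain ⟨x, hxK, hx⟩ := hmax N₀
    have h1 := main N₀ x (hKX hxK)
    have h2 := hβle N₀ (by omega)
    rw [← hx] at h1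
    have h3 : C - (δ / n) * ((N₀ : ℝ) - n) < 0 := by
      have : (n : ℝ) + C * n / δ < N₀ := hN₀
      have hd : C * n / δ < (N₀ : ℝ) - n := by linarith
      rw [div_lt_iff₀ hδpos] at hd
      rw [sub_neg, div_mul_eq_mul_div, lt_div_iff₀ hnR]
      nlinarith
    linarith
  -- intersection point
  obtain ⟨z₁, hz₁⟩ := IsCompact.nonempty_iInter_of_sequence_nonempty_isCompact_isClosed
    E hEdec hEne (hK.of_isClosed_subset (hEcl 0) (fun z hz => hz.1)) hEcl
  simp only [Set.mem_iInter] at hz₁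
  have hz₁K : z₁ ∈ K := (hz₁ 0).1
  have hz₁ge : ∀ m : ℕ, (m : ℝ) * β ≤ S m z₁ := fun m => (hz₁ m).2 m le_rfl
  refine ⟨β, ⟨z₁, hz₁K, ?_⟩, ?_⟩
  · apply tendsto_of_tendsto_of_tendsto_of_le_of_le' tendsto_const_nhds htM
    · filter_upwards [eventually_ge_atTop 1] with m hm
      have hmR : (0:ℝ) < m := by exact_mod_cast hm
      rw [le_div_iff₀ hmR]
      linarith [hz₁ge m]
    · filter_upwards [eventually_ge_atTop 1] with m hm
      have hmR : (0:ℝ) < m := by exact_mod_cast hm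
      exact div_le_div_of_nonneg_right (hle m z₁ (hKX hz₁K)) hmR.le
  · intro ε hε
    have hev := htM.eventually (eventually_lt_nhds (lt_add_of_pos_right β hε))
    obtain ⟨N₀, hN₀⟩ := eventually_atTop.1 hev
    refine ⟨max N₀ 1, fun n hn z hz => ?_⟩
    have hn1 : 1 ≤ n := le_trans (le_max_right _ _) hn
    have hnR : (0:ℝ) < n := by exact_mod_cast hn1
    calc S n z / n ≤ M n / n :=
          div_le_div_of_nonneg_right (hle n z hz) hnR.le
      _ < β + ε := hN₀ n (le_trans (le_max_left _ _) hn)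

lemma coe_int_add (x : ℝ) (k : ℤ) : ((x + k : ℝ) : AddCircle (1:ℝ)) = (x : AddCircle (1:ℝ)) := by
  have h1 : ((k : ℝ) : AddCircle (1:ℝ)) = 0 := by
    have : ((k : ℝ)) = k • (1:ℝ) := by simp
    rw [this, AddCircle.coe_zsmul, AddCircle.coe_period, smul_zero]
  rw [AddCircle.coe_add, h1, add_zero]

/-- If the rotation set of a compact invariant set `X` is the singleton `{α}`, then
every point of `X` has well-defined rotation number `α`, and the convergence of the
displacement averages to `α` is uniform over lifts of points of `X`. -/
theorem stmt_5 (f : Ann ≃ₜ Ann) (F : 𝒜 ≃ₜ 𝒜)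
    (hlift : ∀ z : 𝒜, cov (F z) = f (cov z)) (hFT : ∀ z, F (T z) = T (F z))
    (X : Set Ann) (hXc : IsCompact X) (hXf : f '' X = X) (α : ℝ)
    (hsingle : {r : ℝ | ∃ zt : 𝒜, cov zt ∈ X ∧
        Tendsto (fun n : ℕ => (((⇑F)^[n] zt).1 - zt.1) / (n:ℝ)) atTop (𝓝 r)} = {α}) :
    ∀ ε > 0, ∃ N : ℕ, ∀ n ≥ N, ∀ zt : 𝒜, cov zt ∈ X →
      |(((⇑F)^[n] zt).1 - zt.1) / (n:ℝ) - α| < ε := by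
  -- translation lemmas
  have hP1 : ∀ t : ℝ, (∀ z : 𝒜, F ((z.1 + t, z.2) : 𝒜) = ((F z).1 + t, (F z).2)) →
      ∀ z : 𝒜, F ((z.1 + (t + 1), z.2) : 𝒜) = ((F z).1 + (t + 1), (F z).2) := by
    intro t ht z
    have h := hFT ((z.1 + t, z.2) : 𝒜)
    simp only [T] at h
    rw [ht z] at h
    have e1 : z.1 + (t + 1) = z.1 + t + 1 := by ring
    have e2 : (F z).1 + (t + 1) = (F z).1 + t + 1 := by ring
    rw [e1, e2]
    exact h
  have hPm1 : ∀ t : ℝ, (∀ z : 𝒜, F ((z.1 + t, z.2) : 𝒜) = ((F z).1 + t, (F z).2)) →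
      ∀ z : 𝒜, F ((z.1 + (t - 1), z.2) : 𝒜) = ((F z).1 + (t - 1), (F z).2) := by
    intro t ht z
    have h := hFT ((z.1 + (t - 1), z.2) : 𝒜)
    simp only [T] at h
    have e : z.1 + (t - 1) + 1 = z.1 + t := by ring
    rw [e, ht z] at h
    rw [Prod.ext_iff] at h ⊢
    obtain ⟨h1, h2⟩ := h
    constructor
    · simp only at h1 ⊢
      linarith
    · exact h2.symm
  have hFk : ∀ (k : ℤ) (z : 𝒜), F ((z.1 + (k : ℝ), z.2) : 𝒜) = ((F z).1 + (k : ℝ), (F z).2) := by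
    intro k
    induction k using Int.induction_on with
    | zero => intro z; simp
    | succ i ih =>
      intro z
      have h := hP1 _ ih z
      push_cast at h ⊢
      exact h
    | pred i ih =>
      intro z
      have h := hPm1 _ ih z
      push_cast at h ⊢
      exact h
  have hFnk : ∀ (n : ℕ) (k : ℤ) (z : 𝒜),
      (⇑F)^[n] ((z.1 + (k : ℝ), z.2) : 𝒜) = (((⇑F)^[n] z).1 + (k : ℝ), ((⇑F)^[n] z).2) := by
    intro n
    induction n with
    | zero => intro k z; simp
    | succ n ih =>
      intro k z
      rw [Function.iterate_succ_apply, Function.iterate_succ_apply, hFk k z]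
      exact ih k (F z)
  set Xt : Set 𝒜 := cov ⁻¹' X with hXt
  set S : ℕ → 𝒜 → ℝ := fun n z => ((⇑F)^[n] z).1 - z.1 with hS
  set K : Set 𝒜 := Xt ∩ {z | z.1 ∈ Set.Icc (0:ℝ) 1} with hK
  have hcovcont : Continuous cov := by
    apply Continuous.prodMk
    · exact (AddCircle.continuous_mk' 1).comp continuous_fst
    · exact continuous_snd
  have hXtcl : IsClosed Xt := hXc.isClosed.preimage hcovcont
  have hKcomp : IsCompact K := by
    have h1 : IsCompact ({z : 𝒜 | z.1 ∈ Set.Icc (0:ℝ) 1}) := by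
      have : {z : 𝒜 | z.1 ∈ Set.Icc (0:ℝ) 1} = (Set.Icc (0:ℝ) 1) ×ˢ (Set.univ) := by
        ext z; simp [Set.mem_prod]
      rw [this]
      exact isCompact_Icc.prod isCompact_univ
    exact h1.inter_left hXtcl
  -- fract projection
  have hfract : ∀ z ∈ Xt, ((Int.fract z.1, z.2) : 𝒜) ∈ K ∧ ∀ n, S n (Int.fract z.1, z.2) = S n z := by
    intro z hz
    have heq : ((Int.fract z.1, z.2) : 𝒜) = (z.1 + ((-⌊z.1⌋ : ℤ) : ℝ), z.2) := by
      have : Int.fract z.1 = z.1 + ((-⌊z.1⌋ : ℤ) : ℝ) := by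
        rw [Int.fract]; push_cast; ring
      rw [this]
    have hcov : cov ((Int.fract z.1, z.2) : 𝒜) = cov z := by
      rw [heq]; simp only [cov]; rw [coe_int_add]
    constructor
    · constructor
      · simp only [hXt, Set.mem_preimage]
        rw [hcov]
        exact hz
      · exact ⟨Int.fract_nonneg _, (Int.fract_lt_one _).le⟩
    · intro n
      rw [heq]
      simp only [hS]
      rw [hFnk n (-⌊z.1⌋) z]
      push_cast; ring
  have hg : Set.MapsTo (⇑F) Xt Xt := by
    intro z hz
    simp only [hXt, Set.mem_preimage] at hz ⊢
    rw [hlift z]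
    rw [← hXf]
    exact ⟨cov z, hz, rfl⟩
  have hScont : ∀ n, Continuous (S n) := by
    intro n
    exact (continuous_fst.comp (F.continuous.iterate n)).sub continuous_fst
  have hcoc : ∀ m n z, S (m + n) z = S m z + S n ((⇑F)^[m] z) := by
    intro m n z
    simp only [hS]
    rw [add_comm m n, Function.iterate_add_apply]
    ring
  have hproj : ∀ z ∈ Xt, ∃ w ∈ K, ∀ n, S n w = S n z :=
    fun z hz => ⟨_, (hfract z hz).1, (hfract z hz).2⟩
  have hKX : K ⊆ Xt := fun z hz => hz.1
  -- X nonempty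
  have hα : α ∈ {r : ℝ | ∃ zt : 𝒜, cov zt ∈ X ∧
      Tendsto (fun n : ℕ => (((⇑F)^[n] zt).1 - zt.1) / (n:ℝ)) atTop (𝓝 r)} := by
    rw [hsingle]; rfl
  obtain ⟨z₀t, hz₀X, _⟩ := hα
  have hz₀Xt : z₀t ∈ Xt := hz₀X
  have hKne : K.Nonempty := ⟨_, (hfract z₀t hz₀Xt).1⟩
  -- apply core twice
  obtain ⟨β, ⟨z₁, hz₁K, hz₁t⟩, hub⟩ := core (⇑F) Xt K S hKcomp hKne hKX hg hScont hcoc hproj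
  have hβα : β = α := by
    have : β ∈ {r : ℝ | ∃ zt : 𝒜, cov zt ∈ X ∧
        Tendsto (fun n : ℕ => (((⇑F)^[n] zt).1 - zt.1) / (n:ℝ)) atTop (𝓝 r)} :=
      ⟨z₁, hKX hz₁K, hz₁t⟩
    rw [hsingle] at this
    exact this
  obtain ⟨β', ⟨z₂, hz₂K, hz₂t⟩, hub'⟩ := core (⇑F) Xt K (fun n z => -(S n z)) hKcomp hKne hKX hg
    (fun n => (hScont n).neg) (fun m n z => by show -(S (m+n) z) = -(S m z) + -(S n ((⇑F)^[m] z)); rw [hcoc m n z]; ring)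
    (fun z hz => by obtain ⟨w, hw, he⟩ := hproj z hz; exact ⟨w, hw, fun n => by show -(S n w) = -(S n z); rw [he n]⟩)
  have hβ'α : β' = -α := by
    have ht2 : Tendsto (fun n : ℕ => S n z₂ / n) atTop (𝓝 (-β')) := by
      have := hz₂t.neg
      convert this using 2 with n
      ring
    have : -β' ∈ {r : ℝ | ∃ zt : 𝒜, cov zt ∈ X ∧
        Tendsto (fun n : ℕ => (((⇑F)^[n] zt).1 - zt.1) / (n:ℝ)) atTop (𝓝 r)} :=
      ⟨z₂, hKX hz₂K, ht2⟩
    rw [hsingle] at this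
    simp only [Set.mem_singleton_iff] at this
    linarith [this]
  intro ε hε
  obtain ⟨N₁, hN₁⟩ := hub ε hε
  obtain ⟨N₂, hN₂⟩ := hub' ε hε
  refine ⟨max N₁ N₂, fun n hn zt hzt => ?_⟩
  have h1 : S n zt / n < α + ε := by
    rw [← hβα]
    exact hN₁ n (le_trans (le_max_left _ _) hn) zt hzt
  have h2 : -(S n zt) / n < -α + ε := by
    rw [← hβ'α]
    exact hN₂ n (le_trans (le_max_right _ _) hn) zt hzt
  rw [neg_div] at h2
  rw [abs_sub_lt_iff]
  constructor <;> [skip; skip] <;> simp only [hS] at h1 h2 <;> linarith
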